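/- Let A, B, C be lists over a type α, let k : ℕ, and let L = A ++ (List.replicate k B).join ++ C. For any two positions p, q < L.length there exists m ≤ min k 2 and a strictly monotone injection ι from the positions of L' = A ++ (List.replicate m B).join ++ C into the positions of L such that L'.get i = L.get (ι i) for every position i of L', and both p and q lie in the range of ι. (Unfolding each loop of a transaction program at most twice suffices to preserve any two designated operations, which underlies the fact that robustness of a set of BTPs is equivalent to robustness of their bounded unfoldings.) -/

import Mathlib

namespace Stmt12Aux

variable {α : Type*}

lemma len_eq (A B C : List α) (k : ℕ) :
    (A ++ (List.replicate k B).flatten ++ C).length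
      = A.length + k * B.length + C.length := by
  simp [List.length_flatten]
  omega

lemma mid_mono {b j j' r : ℕ} (r' : ℕ) (hr : r < b) (h : j < j') :
    j * b + r < j' * b + r' := by
  have h2 : (j + 1) * b ≤ j' * b := Nat.mul_le_mul_right b h
  have h3 : (j + 1) * b = j * b + b := Nat.succ_mul _ _
  omega

lemma mid_lt {b i r i' r' : ℕ} (hr : r < b) (hr' : r' < b)
    (h : i * b + r < i' * b + r') : i < i' ∨ (i = i' ∧ r < r') := by
  rcases lt_trichotomy i i' with h1 | h1 | h1
  · exact Or.inl h1
  · exact Or.inr ⟨h1, by subst h1; omega⟩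
  · exact absurd (mid_mono r hr' h1) (by omega)

lemma decomp {a b c k x : ℕ} (hx : x < a + k * b + c) :
    x < a ∨ (∃ i r, i < k ∧ r < b ∧ x = a + i * b + r) ∨
      (∃ y, y < c ∧ x = a + k * b + y) := by
  by_cases h1 : x < a
  · exact Or.inl h1
  by_cases h2 : x < a + k * b
  · refine Or.inr (Or.inl ?_)
    have hb : 0 < b := by
      rcases Nat.eq_zero_or_pos b with hb | hb
      · subst hb; omega
      · exact hb
    have hlt : x - a < k * b := by omega
    refine ⟨(x - a) / b, (x - a) % b, (Nat.div_lt_iff_lt_mul hb).2 (by omega),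
      Nat.mod_lt _ hb, ?_⟩
    have hdm := Nat.div_add_mod (x - a) b
    have hc : b * ((x - a) / b) = ((x - a) / b) * b := Nat.mul_comm _ _
    omega
  · exact Or.inr (Or.inr ⟨x - a - k * b, by omega, by omega⟩)

lemma join_getElem (B : List α) :
    ∀ (k i r : ℕ) (hik : i < k) (hr : r < B.length)
    (h : i * B.length + r < ((List.replicate k B).flatten).length),
      ((List.replicate k B).flatten)[i * B.length + r] = B[r]'hr := by
  intro k
  induction k with
  | zero => intro i r hik; omega
  | succ n ih =>
    intro i r hik hr h
    simp only [List.replicate_succ, List.flatten_cons] at h ⊢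
    match i with
    | 0 =>
      simp only [Nat.zero_mul, Nat.zero_add] at h ⊢
      exact List.getElem_append_left hr
    | i' + 1 =>
      have hs : (i' + 1) * B.length = B.length + i' * B.length := by ring
      have hjl : ((List.replicate n B).flatten).length = n * B.length := by
        simp [List.length_flatten]
      have hnorm : Nat.succ i' * B.length = (i' + 1) * B.length := by
        rw [Nat.succ_eq_add_one]
      have h' : i' * B.length + r < ((List.replicate n B).flatten).length := by
        have := mid_mono 0 hr (show i' < n by omega); omega
      have hge : B.length ≤ (i' + 1) * B.length + r := by omega
      rw [List.getElem_append_right hge]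
      have heq : (i' + 1) * B.length + r - B.length = i' * B.length + r := by omega
      simp only [heq]
      exact ih i' r (by omega) hr h'

lemma L_getElem_A (A B C : List α) (k : ℕ) {x : ℕ} (hx : x < A.length)
    (h : x < (A ++ (List.replicate k B).flatten ++ C).length) :
    (A ++ (List.replicate k B).flatten ++ C)[x] = A[x] := by
  rw [List.getElem_append_left (by simp; omega : x < (A ++ (List.replicate k B).flatten).length),
    List.getElem_append_left hx]

lemma L_getElem_B (A B C : List α) (k : ℕ) {i r : ℕ} (hi : i < k) (hr : r < B.length)
    (h : A.length + i * B.length + r < (A ++ (List.replicate k B).flatten ++ C).length) :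
    (A ++ (List.replicate k B).flatten ++ C)[A.length + i * B.length + r]
      = B[r] := by
  have hjl : ((List.replicate k B).flatten).length = k * B.length := by
    simp [List.length_flatten]
  have hmem : i * B.length + r < k * B.length := mid_mono 0 hr hi
  have h1 : A.length + i * B.length + r < (A ++ (List.replicate k B).flatten).length := by
    simp only [List.length_append, hjl]; omega
  rw [List.getElem_append_left h1,
    List.getElem_append_right (by omega : A.length ≤ A.length + i * B.length + r)]
  have heq : A.length + i * B.length + r - A.length = i * B.length + r := by omega
  simp only [heq]
  exact join_getElem B k i r hi hr (by omega)

lemma L_getElem_C (A B C : List α) (k : ℕ) {y : ℕ} (hy : y < C.length)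
    (h : A.length + k * B.length + y < (A ++ (List.replicate k B).flatten ++ C).length) :
    (A ++ (List.replicate k B).flatten ++ C)[A.length + k * B.length + y]
      = C[y] := by
  have hjl : ((A ++ (List.replicate k B).flatten)).length = A.length + k * B.length := by
    simp [List.length_flatten]
  rw [List.getElem_append_right (by omega : (A ++ (List.replicate k B).flatten).length
      ≤ A.length + k * B.length + y)]
  congr 1
  omega

/-- Key embedding lemma. -/
lemma embed (A B C : List α) (k m : ℕ) (hmk : m ≤ k) (t : ℕ → ℕ)
    (ht1 : ∀ i, i < m → t i < k)
    (ht2 : ∀ i j, i < j → j < m → t i < t j) :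
    ∃ ι : Fin (A ++ (List.replicate m B).flatten ++ C).length →
          Fin (A ++ (List.replicate k B).flatten ++ C).length,
      StrictMono ι ∧
      (∀ i, (A ++ (List.replicate m B).flatten ++ C).get i =
            (A ++ (List.replicate k B).flatten ++ C).get (ι i)) ∧
      (∀ x : Fin (A ++ (List.replicate k B).flatten ++ C).length,
        ((x : ℕ) < A.length ∨
         (∃ j r, j < k ∧ r < B.length ∧ (x : ℕ) = A.length + j * B.length + r ∧
            ∃ s, s < m ∧ t s = j) ∨
         (∃ y, y < C.length ∧ (x : ℕ) = A.length + k * B.length + y)) →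
        ∃ i, ι i = x) := by
  set a := A.length with ha
  set b := B.length with hb
  set c := C.length with hc
  have hL' : (A ++ (List.replicate m B).flatten ++ C).length = a + m * b + c := len_eq A B C m
  have hL : (A ++ (List.replicate k B).flatten ++ C).length = a + k * b + c := len_eq A B C k
  have hsub : (k - m) * b = k * b - m * b := Nat.sub_mul _ _ _
  have hmb : m * b ≤ k * b := Nat.mul_le_mul_right _ hmk
  set f : ℕ → ℕ := fun x =>
    if x < a then x
    else if x < a + m * b then a + t ((x - a) / b) * b + (x - a) % b
    else x + (k - m) * b with hf
  -- basic computations of f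
  have f1 : ∀ x, x < a → f x = x := by
    intro x hx; simp [hf, hx]
  have f2 : ∀ j r, j < m → r < b → f (a + j * b + r) = a + t j * b + r := by
    intro j r hj hr
    have hb0 : 0 < b := by omega
    have hlt : j * b + r < m * b := mid_mono 0 hr hj
    have h1 : ¬ a + j * b + r < a := by omega
    have h2 : a + j * b + r < a + m * b := by omega
    have h3 : a + j * b + r - a = j * b + r := by omega
    have hdiv : (j * b + r) / b = j := by
      rw [Nat.mul_comm j b, Nat.mul_add_div hb0, Nat.div_eq_of_lt hr]
      omega
    have hmod : (j * b + r) % b = r := by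
      rw [Nat.mul_comm j b, Nat.mul_add_mod, Nat.mod_eq_of_lt hr]
    simp only [hf, h1, if_false, h2, if_true, h3, hdiv, hmod, if_neg, if_pos]
  have f3 : ∀ y, f (a + m * b + y) = a + k * b + y := by
    intro y
    have h1 : ¬ a + m * b + y < a := by omega
    have h2 : ¬ a + m * b + y < a + m * b := by omega
    simp only [hf, h1, if_false, h2]
    omega
  -- bound
  have fbound : ∀ x, x < a + m * b + c → f x < a + k * b + c := by
    intro x hx
    rcases decomp hx with h | ⟨i, r, hi, hr, hxe⟩ | ⟨y, hy, hxe⟩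
    · rw [f1 x h]; omega
    · rw [hxe, f2 i r hi hr]
      have := ht1 i hi
      have : t i * b + r < k * b := mid_mono 0 hr this
      omega
    · rw [hxe, f3 y]; omega
  refine ⟨fun i => ⟨f i, by rw [hL]; exact fbound _ (hL' ▸ i.2)⟩, ?_, ?_, ?_⟩
  · -- StrictMono
    intro x y hxy
    simp only [Fin.mk_lt_mk, Fin.lt_def]
    have hx : (x : ℕ) < a + m * b + c := hL' ▸ x.2
    have hy : (y : ℕ) < a + m * b + c := hL' ▸ y.2
    have hxy' : (x : ℕ) < (y : ℕ) := hxy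
    rcases decomp hx with h | ⟨i, r, hi, hr, hxe⟩ | ⟨z, hz, hxe⟩ <;>
      rcases decomp hy with h' | ⟨i', r', hi', hr', hye⟩ | ⟨z', hz', hye⟩
    · rw [f1 _ h, f1 _ h']; omega
    · rw [f1 _ h, hye, f2 i' r' hi' hr']; omega
    · rw [f1 _ h, hye, f3 z']; omega
    · exfalso; have : i * b + r ≥ 0 := by omega
      omega
    · rw [hxe, hye, f2 i r hi hr, f2 i' r' hi' hr']
      have hlt : i * b + r < i' * b + r' := by omega
      rcases mid_lt hr hr' hlt with hlt' | ⟨heq, hlt'⟩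
      · have := ht2 i i' hlt' hi'
        have := mid_mono r' hr this
        omega
      · subst heq; omega
    · rw [hxe, hye, f2 i r hi hr, f3 z']
      have h1 := ht1 i hi
      have h2 : t i * b + r < k * b := mid_mono 0 hr h1
      omega
    · exfalso; omega
    · exfalso
      have : i' * b + r' < m * b := mid_mono 0 hr' hi'
      omega
    · rw [hxe, hye, f3 z, f3 z']; omega
  · -- get
    intro i
    have hx : (i : ℕ) < a + m * b + c := hL' ▸ i.2
    have hfb : f (i : ℕ) < (A ++ (List.replicate k B).flatten ++ C).length := by
      rw [hL]; exact fbound _ hx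
    simp only [List.get_eq_getElem]
    show (A ++ (List.replicate m B).flatten ++ C)[(i : ℕ)]'(i.2)
        = (A ++ (List.replicate k B).flatten ++ C)[f (i : ℕ)]'hfb
    rcases decomp hx with h | ⟨j, r, hj, hr, hxe⟩ | ⟨y, hy, hxe⟩
    · have hfx : f (i : ℕ) = (i : ℕ) := f1 _ h
      rw [getElem_congr_idx hfx, L_getElem_A A B C m h (i.2),
        L_getElem_A A B C k h (by omega)]
    · have hfx : f (i : ℕ) = a + t j * b + r := by rw [hxe]; exact f2 j r hj hr
      rw [getElem_congr_idx hxe, getElem_congr_idx hfx,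
        L_getElem_B A B C m hj hr (by rw [hL']; simp only [← ha, ← hb, ← hc]; have := mid_mono 0 hr hj; omega),
        L_getElem_B A B C k (ht1 j hj) hr
          (by rw [hL]; simp only [← ha, ← hb, ← hc]; have := mid_mono 0 hr (ht1 j hj); omega)]
    · have hfx : f (i : ℕ) = a + k * b + y := by rw [hxe]; exact f3 y
      rw [getElem_congr_idx hxe, getElem_congr_idx hfx,
        L_getElem_C A B C m hy (by rw [hL']; simp only [← ha, ← hb, ← hc]; omega),
        L_getElem_C A B C k hy (by rw [hL]; simp only [← ha, ← hb, ← hc]; omega)]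
  · -- range
    intro x hx
    rcases hx with h | ⟨j, r, hj, hr, hxe, s, hs, hts⟩ | ⟨y, hy, hxe⟩
    · refine ⟨⟨(x : ℕ), by rw [hL']; omega⟩, ?_⟩
      apply Fin.ext
      exact f1 _ h
    · refine ⟨⟨a + s * b + r, by rw [hL']; have := mid_mono 0 hr hs; omega⟩, ?_⟩
      apply Fin.ext
      show f (a + s * b + r) = (x : ℕ)
      rw [f2 s r hs hr, hts, hxe]
    · refine ⟨⟨a + m * b + y, by rw [hL']; omega⟩, ?_⟩
      apply Fin.ext
      show f (a + m * b + y) = (x : ℕ)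
      rw [f3 y, hxe]

end Stmt12Aux

/-- Unfolding each loop at most twice preserves any two designated operations:
if `L = A ++ (replicate k B).join ++ C`, then for any two positions `p, q` of
`L` there is `m ≤ min k 2` such that `L' = A ++ (replicate m B).join ++ C`
embeds as a subsequence of `L` (via a strictly monotone position map preserving
entries) whose range contains `p` and `q`. -/
theorem stmt_12 {α : Type*} (A B C : List α) (k : ℕ)
    (p q : Fin (A ++ (List.replicate k B).flatten ++ C).length) :
    ∃ m ≤ min k 2,
      ∃ ι : Fin (A ++ (List.replicate m B).flatten ++ C).length →
            Fin (A ++ (List.replicate k B).flatten ++ C).length,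
        StrictMono ι ∧
        (∀ i, (A ++ (List.replicate m B).flatten ++ C).get i =
              (A ++ (List.replicate k B).flatten ++ C).get (ι i)) ∧
        (∃ i, ι i = p) ∧ (∃ i, ι i = q) := by
  classical
  set a := A.length
  set b := B.length
  set c := C.length
  have hL : (A ++ (List.replicate k B).flatten ++ C).length = a + k * b + c :=
    Stmt12Aux.len_eq A B C k
  have hp : (p : ℕ) < a + k * b + c := hL ▸ p.2
  have hq : (q : ℕ) < a + k * b + c := hL ▸ q.2
  -- extract possible middle indices
  have key : ∀ (m : ℕ) (t : ℕ → ℕ), m ≤ min k 2 →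
      (∀ i, i < m → t i < k) → (∀ i j, i < j → j < m → t i < t j) →
      ((p : ℕ) < a ∨ (∃ j r, j < k ∧ r < b ∧ (p:ℕ) = a + j * b + r ∧ ∃ s, s < m ∧ t s = j)
        ∨ (∃ y, y < c ∧ (p:ℕ) = a + k * b + y)) →
      ((q : ℕ) < a ∨ (∃ j r, j < k ∧ r < b ∧ (q:ℕ) = a + j * b + r ∧ ∃ s, s < m ∧ t s = j)
        ∨ (∃ y, y < c ∧ (q:ℕ) = a + k * b + y)) →
      ∃ m' ≤ min k 2,
      ∃ ι : Fin (A ++ (List.replicate m' B).flatten ++ C).length →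
            Fin (A ++ (List.replicate k B).flatten ++ C).length,
        StrictMono ι ∧
        (∀ i, (A ++ (List.replicate m' B).flatten ++ C).get i =
              (A ++ (List.replicate k B).flatten ++ C).get (ι i)) ∧
        (∃ i, ι i = p) ∧ (∃ i, ι i = q) := by
    intro m t hm ht1 ht2 hdp hdq
    obtain ⟨ι, h1, h2, h3⟩ :=
      Stmt12Aux.embed A B C k m (le_trans hm (min_le_left _ _)) t ht1 ht2
    exact ⟨m, hm, ι, h1, h2, h3 p hdp, h3 q hdq⟩
  rcases Stmt12Aux.decomp hp with hpd | ⟨ip, rp, hip, hrp, hpe⟩ | ⟨yp, hyp, hpe⟩ <;>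
    rcases Stmt12Aux.decomp hq with hqd | ⟨iq, rq, hiq, hrq, hqe⟩ | ⟨yq, hyq, hqe⟩
  -- p not mid, q not mid
  · exact key 0 (fun _ => 0) (by omega) (by omega) (by omega)
      (Or.inl hpd) (Or.inl hqd)
  · -- p left, q mid
    exact key 1 (fun _ => iq) (by omega) (fun i h => hiq) (by omega)
      (Or.inl hpd) (Or.inr (Or.inl ⟨iq, rq, hiq, hrq, hqe, 0, by omega, rfl⟩))
  · exact key 0 (fun _ => 0) (by omega) (by omega) (by omega)
      (Or.inl hpd) (Or.inr (Or.inr ⟨yq, hyq, hqe⟩))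
  · -- p mid, q left
    exact key 1 (fun _ => ip) (by omega) (fun i h => hip) (by omega)
      (Or.inr (Or.inl ⟨ip, rp, hip, hrp, hpe, 0, by omega, rfl⟩)) (Or.inl hqd)
  · -- p mid, q mid
    by_cases hij : ip = iq
    · subst hij
      exact key 1 (fun _ => ip) (by omega) (fun i h => hip) (by omega)
        (Or.inr (Or.inl ⟨ip, rp, hip, hrp, hpe, 0, by omega, rfl⟩))
        (Or.inr (Or.inl ⟨ip, rq, hip, hrq, hqe, 0, by omega, rfl⟩))
    · refine key 2 (fun s => if s = 0 then min ip iq else max ip iq) (by omega)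
        (fun i h => by split <;> omega)
        (fun i j hij' hj => by
          have hi0 : i = 0 := by omega
          have hj1 : j = 1 := by omega
          subst hi0; subst hj1
          simp only [if_pos rfl, if_neg one_ne_zero]
          exact min_lt_max.mpr hij)
        (Or.inr (Or.inl ⟨ip, rp, hip, hrp, hpe, ?_⟩))
        (Or.inr (Or.inl ⟨iq, rq, hiq, hrq, hqe, ?_⟩))
      · rcases le_or_gt ip iq with h | h
        · exact ⟨0, by omega, by simp; omega⟩
        · exact ⟨1, by omega, by simp; omega⟩
      · rcases le_or_gt ip iq with h | h
        · exact ⟨1, by omega, by simp; omega⟩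
        · exact ⟨0, by omega, by simp; omega⟩
  · -- p mid, q right
    exact key 1 (fun _ => ip) (by omega) (fun i h => hip) (by omega)
      (Or.inr (Or.inl ⟨ip, rp, hip, hrp, hpe, 0, by omega, rfl⟩))
      (Or.inr (Or.inr ⟨yq, hyq, hqe⟩))
  · exact key 0 (fun _ => 0) (by omega) (by omega) (by omega)
      (Or.inr (Or.inr ⟨yp, hyp, hpe⟩)) (Or.inl hqd)
  · exact key 1 (fun _ => iq) (by omega) (fun i h => hiq) (by omega)
      (Or.inr (Or.inr ⟨yp, hyp, hpe⟩))
      (Or.inr (Or.inl ⟨iq, rq, hiq, hrq, hqe, 0, by omega, rfl⟩))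
  · exact key 0 (fun _ => 0) (by omega) (by omega) (by omega)
      (Or.inr (Or.inr ⟨yp, hyp, hpe⟩)) (Or.inr (Or.inr ⟨yq, hyq, hqe⟩))
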